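/- Let n ≥ 1 be an integer and let x_1,…,x_n ∈ ℂ, nonzero a_1,…,a_n ∈ ℂ, and t ∈ ℂ with t ≠ 1. For each j = 1,…,n let P_j be a complex polynomial of degree at most j whose coefficients satisfy (coefficient of X^j in P_j) = (−1)^j · t a_1⋯a_j · (constant coefficient of P_j). Then det_{1≤i,j≤n}( P_j(x_i) · ∏_{k=j+1}^{n} (1 − a_k x_i) ) = ((1 − t a_1⋯a_n x_1⋯x_n)/(1 − t)) · ∏_{i=1}^{n} P_i(1/a_i) · ∏_{1≤i<j≤n} a_j (x_j − x_i). -/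

import Mathlib

set_option maxHeartbeats 1000000

open Finset Polynomial


lemma coeff_mul_of_le {R : Type*} [CommRing R] {p q : R[X]} {d e : ℕ}
    (hp : p.natDegree ≤ d) (hq : q.natDegree ≤ e) :
    (p * q).coeff (d + e) = p.coeff d * q.coeff e := by
  rw [Polynomial.coeff_mul]
  apply Finset.sum_eq_single (d, e)
  · rintro ⟨i, j⟩ hij hne
    rw [Finset.HasAntidiagonal.mem_antidiagonal] at hij
    simp only at hij
    rcases lt_or_ge d i with h | h
    · rw [Polynomial.coeff_eq_zero_of_natDegree_lt (lt_of_le_of_lt hp h), zero_mul]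
    · have hj : e < j := by
        rcases lt_or_ge e j with h' | h'
        · exact h'
        · exfalso; apply hne
          have : i = d ∧ j = e := by omega
          simp [this.1, this.2]
      rw [Polynomial.coeff_eq_zero_of_natDegree_lt (lt_of_le_of_lt hq hj), mul_zero]
  · intro h; exact absurd (Finset.HasAntidiagonal.mem_antidiagonal.mpr (by simp)) h

lemma coeff_prod_linear {R : Type*} [CommRing R] {ι : Type*} (s : Finset ι) (p : ι → R[X])
    (hp : ∀ i ∈ s, (p i).natDegree ≤ 1) :
    (∏ i ∈ s, p i).coeff s.card = ∏ i ∈ s, (p i).coeff 1 := by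
  classical
  induction s using Finset.induction_on with
  | empty => simp
  | @insert a s ha ih =>
    have hdeg : (∏ i ∈ s, p i).natDegree ≤ s.card := by
      refine le_trans (Polynomial.natDegree_prod_le _ _) ?_
      refine le_trans (Finset.sum_le_card_nsmul s _ 1 fun i hi =>
        hp i (Finset.mem_insert_of_mem hi)) ?_
      simp
    rw [Finset.prod_insert ha, Finset.prod_insert ha, Finset.card_insert_of_notMem ha,
      show s.card + 1 = 1 + s.card from add_comm _ _,
      coeff_mul_of_le (hp a (Finset.mem_insert_self a s)) hdeg,
      ih (fun i hi => hp i (Finset.mem_insert_of_mem hi))]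

lemma coeff_zero_prod {R : Type*} [CommRing R] {ι : Type*} (s : Finset ι) (p : ι → R[X]) :
    (∏ i ∈ s, p i).coeff 0 = ∏ i ∈ s, (p i).coeff 0 := by
  simp [Polynomial.coeff_zero_eq_eval_zero, Polynomial.eval_prod]

lemma prod_X_sub_C_dvd {R : Type*} [CommRing R] [IsDomain R] {ι : Type*} (s : Finset ι)
    (y : ι → R) (hy : Set.InjOn y s) (f : R[X]) (h : ∀ i ∈ s, f.eval (y i) = 0) :
    (∏ i ∈ s, (X - C (y i))) ∣ f := by
  classical
  induction s using Finset.induction_on generalizing f with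
  | empty => simp
  | @insert a s ha ih =>
    obtain ⟨g, hg⟩ := (Polynomial.dvd_iff_isRoot).mpr (h a (Finset.mem_insert_self a s))
    rw [Finset.prod_insert ha, hg]
    refine mul_dvd_mul_left _ (ih (hy.mono (by simp [Finset.subset_insert]))
      g (fun i hi => ?_))
    have h0 := h i (Finset.mem_insert_of_mem hi)
    rw [hg, Polynomial.eval_mul] at h0
    have hne : y i - y a ≠ 0 := by
      rw [sub_ne_zero]
      intro he
      exact ha (by rwa [hy (by simp [hi]) (by simp) he] at hi)
    simpa [sub_ne_zero, hne] using h0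

lemma structure_lemma {R : Type*} [CommRing R] [IsDomain R] {m : ℕ}
    (y : Fin m → R) (hy : Function.Injective y) (c : R) (f : R[X])
    (hdeg : f.natDegree ≤ m + 1)
    (hroots : ∀ i, f.eval (y i) = 0)
    (hnorm : f.coeff (m + 1) = (-1) ^ (m + 1) * c * f.coeff 0) :
    ∃ β : R, f = C β * ((∏ i, (X - C (y i))) * (1 - C (c * ∏ i, y i) * X)) := by
  classical
  set p : R[X] := ∏ i : Fin m, (X - C (y i)) with hp
  have hpm : p.Monic := monic_prod_of_monic _ _ (fun i _ => monic_X_sub_C _)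
  have hpd : p.natDegree = m := by
    rw [hp, Polynomial.natDegree_prod _ _ (fun i _ => Polynomial.X_sub_C_ne_zero _)]
    simp
  obtain ⟨q, hq⟩ := prod_X_sub_C_dvd Finset.univ y (hy.injOn) f (fun i _ => hroots i)
  rcases eq_or_ne q 0 with rfl | hq0
  · exact ⟨0, by simp [hq]⟩
  have hf0 : f ≠ 0 := by
    rw [hq]; exact mul_ne_zero hpm.ne_zero hq0
  have hqd : q.natDegree ≤ 1 := by
    have := Polynomial.natDegree_mul hpm.ne_zero hq0
    rw [← hq, hpd] at this
    omega
  have hqform := Polynomial.eq_X_add_C_of_natDegree_le_one hqd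
  set α := q.coeff 1 with hα
  set β := q.coeff 0 with hβ
  -- coefficient computations
  have hp0 : p.coeff 0 = (-1) ^ m * ∏ i, y i := by
    rw [Polynomial.coeff_zero_eq_eval_zero, hp, Polynomial.eval_prod]
    simp only [Polynomial.eval_sub, Polynomial.eval_X, Polynomial.eval_C, zero_sub]
    calc ∏ x : Fin m, -y x = ∏ x : Fin m, (-1) * y x := by simp
      _ = (∏ _x : Fin m, (-1 : R)) * ∏ x, y x := Finset.prod_mul_distrib
      _ = (-1) ^ m * ∏ x, y x := by simp
  have hcoefftop : f.coeff (m + 1) = α := by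
    rw [hq, hqform]
    rw [mul_add, mul_comm p (C α * X)]
    rw [Polynomial.coeff_add]
    have h1 : (C α * X * p).coeff (m + 1) = α := by
      rw [mul_assoc, Polynomial.coeff_C_mul, Polynomial.coeff_X_mul,
        show p.coeff m = 1 from hpd ▸ hpm.coeff_natDegree, mul_one]
    have h2 : (p * C β).coeff (m + 1) = 0 := by
      rw [mul_comm, Polynomial.coeff_C_mul,
        Polynomial.coeff_eq_zero_of_natDegree_lt (by omega : p.natDegree < m + 1), mul_zero]
    rw [h1, h2, add_zero]
  have hcoeff0 : f.coeff 0 = (-1) ^ m * (∏ i, y i) * β := by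
    rw [hq, Polynomial.mul_coeff_zero, hp0]
  have hαβ : α = -(c * ∏ i, y i) * β := by
    rw [hcoefftop, hcoeff0] at hnorm
    rw [hnorm, pow_succ]
    ring_nf
    rw [pow_mul, ← pow_mul, mul_comm m 2, pow_mul, neg_one_sq, one_pow, mul_one]
  refine ⟨β, ?_⟩
  rw [hq, hqform, hαβ]
  rw [show (C (-(c * ∏ i, y i) * β) : R[X]) = -C (c * ∏ i, y i) * C β by
    rw [Polynomial.C_mul, Polynomial.C_neg]]
  ring

section FinSets
variable {m : ℕ}

lemma ioi_castSucc' (i : Fin m) :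
    Finset.Ioi (i.castSucc) = insert (Fin.last m) ((Finset.Ioi i).image Fin.castSucc) := by
  ext k
  simp only [Finset.mem_Ioi, Finset.mem_insert, Finset.mem_image]
  constructor
  · intro hk
    rcases eq_or_ne k (Fin.last m) with rfl | hne
    · exact Or.inl rfl
    · obtain ⟨k', rfl⟩ := Fin.exists_castSucc_eq.mpr hne
      exact Or.inr ⟨k', by rwa [Fin.castSucc_lt_castSucc_iff] at hk, rfl⟩
  · rintro (rfl | ⟨k', hk', rfl⟩)
    · exact Fin.castSucc_lt_last i
    · rwa [Fin.castSucc_lt_castSucc_iff]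

lemma ioi_succ' (i : Fin m) :
    Finset.Ioi (i.succ) = (Finset.Ioi i).image Fin.succ := by
  ext k
  simp only [Finset.mem_Ioi, Finset.mem_image]
  constructor
  · intro hk
    have h0 : k ≠ 0 := by
      intro h; rw [h] at hk; exact absurd hk (by simp [Fin.lt_def])
    obtain ⟨k', rfl⟩ := Fin.exists_succ_eq.mpr h0
    exact ⟨k', by rwa [Fin.succ_lt_succ_iff] at hk, rfl⟩
  · rintro ⟨k', hk', rfl⟩
    rwa [Fin.succ_lt_succ_iff]

lemma ioi_zero' : Finset.Ioi (0 : Fin (m + 1)) = Finset.univ.image Fin.succ := by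
  ext k
  simp only [Finset.mem_Ioi, Finset.mem_image, Finset.mem_univ, true_and]
  rw [Fin.pos_iff_ne_zero', ← Fin.exists_succ_eq]

lemma ioi_castSucc_eq_image_succ_Ici (i : Fin m) :
    Finset.Ioi (i.castSucc) = (Finset.Ici i).image Fin.succ := by
  ext k
  simp only [Finset.mem_Ioi, Finset.mem_image, Finset.mem_Ici]
  constructor
  · intro hk
    have h0 : k ≠ 0 := by
      intro h; rw [h] at hk
      exact absurd hk (by simp [Fin.lt_def])
    obtain ⟨k', rfl⟩ := Fin.exists_succ_eq.mpr h0
    exact ⟨k', by rwa [Fin.castSucc_lt_succ_iff] at hk, rfl⟩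
  · rintro ⟨k', hk', rfl⟩
    rwa [Fin.castSucc_lt_succ_iff]

lemma iic_castSucc' (i : Fin m) :
    Finset.Iic (i.castSucc) = (Finset.Iic i).image Fin.castSucc := by
  ext k
  simp only [Finset.mem_Iic, Finset.mem_image]
  constructor
  · intro hk
    have hne : k ≠ Fin.last m := by
      intro h; rw [h] at hk
      exact absurd (lt_of_le_of_lt hk (Fin.castSucc_lt_last i)) (lt_irrefl _)
    obtain ⟨k', rfl⟩ := Fin.exists_castSucc_eq.mpr hne
    exact ⟨k', by rwa [Fin.castSucc_le_castSucc_iff] at hk, rfl⟩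
  · rintro ⟨k', hk', rfl⟩
    rwa [Fin.castSucc_le_castSucc_iff]

lemma iic_last' : Finset.Iic (Fin.last m) = Finset.univ := by
  ext k; simp [Fin.le_last]

lemma ioi_last' : Finset.Ioi (Fin.last m) = (∅ : Finset (Fin (m + 1))) := by
  ext k; simp [Fin.le_last, Finset.mem_Ioi]

lemma univ_split_prod {M : Type*} [CommMonoid M] (j : Fin (m + 1)) (g : Fin (m + 1) → M) :
    ∏ k, g k = (∏ k ∈ Finset.Iic j, g k) * ∏ k ∈ Finset.Ioi j, g k := by
  rw [← Finset.prod_union (by simp [Finset.disjoint_left])]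
  congr 1
  ext k
  simp only [Finset.mem_univ, Finset.mem_union, Finset.mem_Iic, Finset.mem_Ioi, true_iff]
  exact le_or_gt k j

theorem generic_det {R : Type*} [CommRing R] [IsDomain R] :
    ∀ n : ℕ, ∀ (x : Fin n → R) (a : Fin n → Rˣ) (t : R),
    Function.Injective x →
    (∀ (i j : Fin n), (a j : R) * x i ≠ 1) →
    (∀ (j : Fin n) (S : Finset (Fin n)), S.Nonempty →
      t * (∏ k ∈ Finset.Iic j, (a k : R)) * ∏ i ∈ S, x i ≠ (a j : R)) →
    ∀ P : Fin n → Polynomial R,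
    (∀ j : Fin n, (P j).natDegree ≤ j.val + 1) →
    (∀ j : Fin n, (P j).coeff (j.val + 1) =
      (-1) ^ (j.val + 1) * (t * ∏ k ∈ Finset.Iic j, (a k : R)) * (P j).coeff 0) →
    (1 - t) * Matrix.det (Matrix.of fun i j : Fin n =>
      (P j).eval (x i) * ∏ k ∈ Finset.Ioi j, (1 - (a k : R) * x i))
    = (1 - t * (∏ i, (a i : R)) * ∏ i, x i) *
        (∏ i, (P i).eval (((a i)⁻¹ : Rˣ) : R)) *
        ∏ i : Fin n, ∏ j ∈ Finset.Ioi i, (a j : R) * (x j - x i) := by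
  intro n
  induction n with
  | zero =>
    intro x a t _ _ _ P _ _
    simp [Matrix.det_isEmpty]
  | succ m IH =>
    intro x a t hx hxa hta P hdeg hnorm
    rcases Nat.eq_zero_or_pos m with rfl | hm
    · -- base case n = 1
      have hIic : (Finset.Iic (0 : Fin 1)) = {0} := by
        ext k; simp [Fin.eq_zero k]
      have hIoi : (Finset.Ioi (0 : Fin 1)) = ∅ := by
        ext k; simp [Fin.eq_zero k]
      have hn := hnorm 0
      rw [hIic] at hn
      simp only [Finset.prod_singleton, pow_one, Fin.val_zero, zero_add] at hn
      have hP := Polynomial.eq_X_add_C_of_natDegree_le_one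
        (le_trans (hdeg 0) (by norm_num))
      rw [Matrix.det_fin_one]
      simp only [Matrix.of_apply, hIoi, Finset.prod_empty, mul_one]
      rw [Fin.prod_univ_one, Fin.prod_univ_one, Fin.prod_univ_one, Fin.prod_univ_one, hIoi,
        Finset.prod_empty, mul_one]
      rw [hP, hn]
      have hu : (a 0 : R) * ((a 0)⁻¹ : Rˣ) = 1 := Units.mul_inv _
      simp only [Polynomial.eval_add, Polynomial.eval_mul, Polynomial.eval_C,
        Polynomial.eval_X]
      linear_combination (t * (P 0).coeff 0 * (1 - t * (a 0 : R) * x 0)) * hu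
    ·
      set x' : Fin m → R := fun i => x i.succ with hx'def
      have hx' : Function.Injective x' := fun i j h => Fin.succ_injective _ (hx h)
      set L : R := (a (Fin.last m) : R) with hLdef
      set L' : R := (((a (Fin.last m))⁻¹ : Rˣ) : R) with hL'def
      have hLL' : L * L' = 1 := Units.mul_inv _
      set Y : R := ∏ i : Fin m, x' i with hYdef
      set A : R := ∏ i, (a i : R) with hAdef
      set A' : R := ∏ i : Fin m, (a i.castSucc : R) with hA'def
      have hAA' : A = A' * L := Fin.prod_univ_castSucc _
      set E : R → Fin (m + 1) → R :=
        fun r j => (P j).eval r * ∏ k ∈ Finset.Ioi j, (1 - (a k : R) * r) with hEdef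
      set Mval : (Fin (m + 1) → R) → Matrix (Fin (m + 1)) (Fin (m + 1)) R :=
        fun v => Matrix.of fun i j => E (v i) j with hMdef
      set Qp : Fin (m + 1) → R[X] :=
        fun j => P j * ∏ k ∈ Finset.Ioi j, (1 - C (a k : R) * X) with hQdef
      set Np : Matrix (Fin (m + 1)) (Fin (m + 1)) R[X] :=
        Matrix.of fun i j => (Fin.cons (Qp j) (fun i' => C (E (x' i') j)) : Fin (m + 1) → R[X]) i with hNdef
      have heval : ∀ r : R, Polynomial.eval r Np.det = (Mval (Fin.cons r x')).det := by
        intro r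
        rw [show Polynomial.eval r Np.det = (Polynomial.evalRingHom r) Np.det from rfl,
          RingHom.map_det]
        congr 1
        ext i j
        refine Fin.cases ?_ (fun i' => ?_) i
        · simp [hNdef, hMdef, hQdef, hEdef, Matrix.map_apply, Polynomial.eval_prod]
        · simp [hNdef, hMdef, Matrix.map_apply]
      set f : R[X] := C (1 - t) * Np.det with hfdef
      have hf_eval : ∀ r : R, f.eval r = (1 - t) * (Mval (Fin.cons r x')).det := by
        intro r
        rw [hfdef, Polynomial.eval_mul, Polynomial.eval_C, heval r]
      set D : Fin (m + 1) → R :=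
        fun j => (Matrix.of fun i' j' : Fin m => E (x' i') (j.succAbove j')).det with hDdef
      have hNdet : Np.det = ∑ j : Fin (m + 1), C ((-1) ^ (j : ℕ) * D j) * Qp j := by
        rw [Matrix.det_succ_row_zero]
        refine Finset.sum_congr rfl fun j _ => ?_
        have h0 : Np 0 j = Qp j := by simp [hNdef]
        have hsub : (Np.submatrix Fin.succ j.succAbove) =
            (Matrix.of fun i' j' : Fin m => E (x' i') (j.succAbove j')).map C := by
          ext i' j'
          simp [hNdef, Matrix.submatrix_apply, Matrix.map_apply]
        rw [h0, hsub, ← RingHom.mapMatrix_apply, ← RingHom.map_det,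
          show (Matrix.of fun i' j' : Fin m => E (x' i') (j.succAbove j')).det = D j from rfl,
          map_mul, map_pow, map_neg, map_one]
        ring
      have hlin : ∀ b : R, (1 - C b * X : R[X]).natDegree ≤ 1 := by
        intro b
        refine le_trans (Polynomial.natDegree_sub_le _ _) ?_
        simp only [Polynomial.natDegree_one, max_le_iff]
        exact ⟨Nat.zero_le _, le_trans (Polynomial.natDegree_C_mul_le _ _)
          Polynomial.natDegree_X_le⟩
      have hprod_deg : ∀ j : Fin (m + 1),
          (∏ k ∈ Finset.Ioi j, (1 - C (a k : R) * X)).natDegree ≤ m - j.val := by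
        intro j
        refine le_trans (Polynomial.natDegree_prod_le _ _) ?_
        refine le_trans (Finset.sum_le_card_nsmul _ _ 1 fun k _ => hlin _) ?_
        rw [smul_eq_mul, mul_one, Fin.card_Ioi]
        omega
      have hQdeg : ∀ j, (Qp j).natDegree ≤ m + 1 := by
        intro j
        rw [hQdef]
        refine le_trans (Polynomial.natDegree_mul_le) ?_
        have := hdeg j
        have := hprod_deg j
        have := j.isLt
        omega
      have hfdeg : f.natDegree ≤ m + 1 := by
        rw [hfdef]
        refine le_trans (Polynomial.natDegree_mul_le) ?_
        rw [Polynomial.natDegree_C, zero_add, hNdet]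
        refine Polynomial.natDegree_sum_le_of_forall_le _ _ fun j _ => ?_
        exact le_trans (Polynomial.natDegree_mul_le)
          (by rw [Polynomial.natDegree_C, zero_add]; exact hQdeg j)
      have hroots : ∀ i' : Fin m, f.eval (x' i') = 0 := by
        intro i'
        rw [hf_eval]
        have : (Mval (Fin.cons (x' i') x')).det = 0 := by
          refine Matrix.det_zero_of_row_eq (i := 0) (j := i'.succ)
            (Fin.succ_ne_zero i').symm ?_
          funext j
          simp [hMdef, Fin.cons_zero, Fin.cons_succ]
        rw [this, mul_zero]
      have hC0 : ∀ j, (Qp j).coeff 0 = (P j).coeff 0 := by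
        intro j
        simp only [hQdef]
        rw [Polynomial.mul_coeff_zero, coeff_zero_prod]
        simp
      have hCtop : ∀ j, (Qp j).coeff (m + 1) = (-1) ^ (m + 1) * (t * A) * (P j).coeff 0 := by
        intro j
        have hjlt := j.isLt
        have hcard : (Finset.Ioi j).card = m - j.val := by rw [Fin.card_Ioi]; omega
        simp only [hQdef]
        have hcm := coeff_mul_of_le (hdeg j) (hprod_deg j)
        rw [show (j.val + 1) + (m - j.val) = m + 1 by omega] at hcm
        rw [hcm, show m - j.val = (Finset.Ioi j).card from hcard.symm,
          coeff_prod_linear _ _ (fun k _ => hlin _)]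
        have hone : ∀ k : Fin (m + 1), (1 - C ((a k : R)) * X).coeff 1 = -(a k : R) := by
          intro k
          rw [Polynomial.coeff_sub, Polynomial.coeff_one, Polynomial.coeff_C_mul,
            Polynomial.coeff_X_one]
          simp
        simp only [hone]
        have hneg : ∏ k ∈ Finset.Ioi j, -((a k : R))
            = (-1) ^ (m - j.val) * ∏ k ∈ Finset.Ioi j, (a k : R) := by
          rw [Finset.prod_congr rfl fun k (_ : k ∈ Finset.Ioi j) =>
            (neg_one_mul ((a k : R))).symm]
          rw [Finset.prod_mul_distrib, Finset.prod_const, hcard]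
        rw [hneg, hnorm j]
        have e1 : (-1 : R) ^ (j.val + 1) * (-1) ^ (m - j.val) = (-1) ^ (m + 1) := by
          rw [← pow_add]
          congr 1
          omega
        have e2 : A = (∏ k ∈ Finset.Iic j, (a k : R)) * ∏ k ∈ Finset.Ioi j, (a k : R) := by
          rw [hAdef]
          exact univ_split_prod j _
        rw [e2]
        linear_combination (t * (P j).coeff 0 * (∏ k ∈ Finset.Iic j, (a k : R)) *
          (∏ k ∈ Finset.Ioi j, (a k : R))) * e1
      have hfnorm : f.coeff (m + 1) = (-1) ^ (m + 1) * (t * A) * f.coeff 0 := by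
        have hcoeff : ∀ k : ℕ, f.coeff k
            = (1 - t) * ∑ j : Fin (m + 1), (-1) ^ (j : ℕ) * D j * (Qp j).coeff k := by
          intro k
          rw [hfdef, Polynomial.coeff_C_mul, hNdet, Polynomial.finset_sum_coeff]
          congr 1
          refine Finset.sum_congr rfl fun j _ => ?_
          rw [Polynomial.coeff_C_mul]
        rw [hcoeff, hcoeff]
        have h1 : ∑ j : Fin (m + 1), (-1) ^ (j : ℕ) * D j * (Qp j).coeff (m + 1)
            = (-1) ^ (m + 1) * (t * A) *
              ∑ j : Fin (m + 1), (-1) ^ (j : ℕ) * D j * (Qp j).coeff 0 := by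
          rw [Finset.mul_sum]
          refine Finset.sum_congr rfl fun j _ => ?_
          rw [hCtop j, hC0 j]
          ring
        rw [h1]
        ring
      obtain ⟨β, hβ⟩ := structure_lemma x' hx' (t * A) f hfdeg hroots hfnorm
      have hconsx : Fin.cons (x 0) x' = x := by
        funext i
        refine Fin.cases ?_ (fun i' => ?_) i
        · simp
        · simp [hx'def]
      set Pl : R := (P (Fin.last m)).eval L' with hPldef
      set Pi' : R := ∏ i : Fin m, (P i.castSucc).eval (((a i.castSucc)⁻¹ : Rˣ) : R) with hPi'def
      set Sa : R := ∏ j' : Fin m, (a j'.succ : R) with hSadef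
      set Ca' : R := ∏ i' : Fin m, ∏ j' ∈ Finset.Ioi i', (a j'.castSucc : R) with hCa'def
      set Cs : R := ∏ i' : Fin m, ∏ j' ∈ Finset.Ioi i', (a j'.succ : R) with hCsdef
      set G : R := ∏ i' : Fin m, ∏ j' ∈ Finset.Ioi i', (x' j' - x' i') with hGdef
      set Xp : R := ∏ i' : Fin m, (L' - x' i') with hXpdef
      set hp2 : R[X] := (∏ i : Fin m, (X - C (x' i))) * (1 - C (t * A * Y) * X) with hp2def
      have hβ' : f = C β * hp2 := by rw [hp2def, hYdef]; exact hβ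
      have hp2eval : ∀ r : R, hp2.eval r
          = (∏ i : Fin m, (r - x' i)) * (1 - t * A * Y * r) := by
        intro r
        simp [hp2def, Polynomial.eval_prod]
      have hsuccinj : ∀ i ∈ (Finset.univ : Finset (Fin m)), ∀ j ∈ (Finset.univ : Finset (Fin m)),
          Fin.succ i = Fin.succ j → i = j := fun i _ j _ h => Fin.succ_injective _ h
      -- nonvanishing facts
      have hx'u : ∀ i' : Fin m, L' - x' i' ≠ 0 := by
        intro i' h
        have he : L' = x' i' := sub_eq_zero.mp h
        exact hxa i'.succ (Fin.last m) (show L * x' i' = 1 by rw [← he]; exact hLL')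
      have hXpne : Xp ≠ 0 := by
        rw [hXpdef]
        exact Finset.prod_ne_zero_iff.mpr fun i _ => hx'u i
      have htAY : 1 - t * A' * Y ≠ 0 := by
        intro h0
        have h1 : t * A' * Y = 1 := (sub_eq_zero.mp h0).symm
        have h2 : t * A * Y = L := by rw [hAA']; linear_combination L * h1
        refine hta (Fin.last m) (Finset.univ.image Fin.succ)
          (Finset.Nonempty.image ⟨⟨0, hm⟩, Finset.mem_univ _⟩ _) ?_
        rw [iic_last', Finset.prod_image hsuccinj, ← hAdef,
          show (∏ i : Fin m, x i.succ) = Y from rfl]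
        exact h2
      have htAYL : 1 - t * A * Y * L' = 1 - t * A' * Y := by
        rw [hAA']; linear_combination (-(t * A' * Y)) * hLL'
      -- evaluation of f at L'
      set W : Matrix (Fin (m + 1)) (Fin (m + 1)) R := Mval (Fin.cons L' x') with hWdefM
      have hrow0 : ∀ j : Fin (m + 1), j ≠ Fin.last m → W 0 j = 0 := by
        intro j hj
        show E ((Fin.cons L' x' : Fin (m + 1) → R) 0) j = 0
        rw [Fin.cons_zero]
        simp only [hEdef]
        rw [Finset.prod_eq_zero (Finset.mem_Ioi.mpr (Fin.lt_last_iff_ne_last.mpr hj))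
          (by rw [show (a (Fin.last m) : R) = L from rfl, sub_eq_zero]; exact hLL'.symm), mul_zero]
      set B : Matrix (Fin m) (Fin m) R := Matrix.of fun i' j' =>
        (P j'.castSucc).eval (x' i') * ∏ k ∈ Finset.Ioi j', (1 - (a k.castSucc : R) * x' i')
        with hBdef
      have hcastinj : ∀ s : Finset (Fin m), ∀ i ∈ s, ∀ j ∈ s,
          Fin.castSucc i = Fin.castSucc j → i = j :=
        fun s i _ j _ h => Fin.castSucc_injective _ h
      have hsubW : (W.submatrix Fin.succ (Fin.last m).succAbove) =
          Matrix.of (fun i' j' : Fin m => (1 - L * x' i') * B i' j') := by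
        ext i' j'
        rw [Matrix.submatrix_apply, Fin.succAbove_last]
        show E ((Fin.cons L' x' : Fin (m + 1) → R) i'.succ) j'.castSucc = _
        rw [Fin.cons_succ]
        simp only [hEdef, hBdef, Matrix.of_apply]
        rw [ioi_castSucc' j', Finset.prod_insert (by
          intro hmem
          obtain ⟨k, _, hk⟩ := Finset.mem_image.mp hmem
          exact absurd hk (Fin.castSucc_lt_last k).ne),
          Finset.prod_image (hcastinj _)]
        rw [show (a (Fin.last m) : R) = L from rfl]
        ring
      have hW0last : W 0 (Fin.last m) = Pl := by
        show E ((Fin.cons L' x' : Fin (m + 1) → R) 0) (Fin.last m) = Pl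
        rw [Fin.cons_zero]
        simp only [hEdef]
        rw [ioi_last', Finset.prod_empty, mul_one, hPldef]
      have hWdet : W.det = (-1) ^ m * Pl * ((∏ i' : Fin m, (1 - L * x' i')) * B.det) := by
        rw [Matrix.det_succ_row_zero]
        rw [Finset.sum_eq_single_of_mem (Fin.last m) (Finset.mem_univ _)
          (fun j _ hj => by rw [hrow0 j hj]; ring)]
        rw [hsubW, Matrix.det_mul_column, hW0last, Fin.val_last]
      -- induction hypothesis
      have hIicProd : ∀ j : Fin m, ∏ k ∈ Finset.Iic j, (a k.castSucc : R)
          = ∏ k ∈ Finset.Iic j.castSucc, (a k : R) := by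
        intro j
        rw [iic_castSucc', Finset.prod_image (hcastinj _)]
      have hta' : ∀ (j : Fin m) (S : Finset (Fin m)), S.Nonempty →
          t * (∏ k ∈ Finset.Iic j, ((fun i => a i.castSucc) k : R)) * ∏ i ∈ S, x' i
            ≠ ((fun i => a i.castSucc) j : R) := by
        intro j S hS h
        refine hta j.castSucc (S.image Fin.succ) (hS.image _) ?_
        rw [Finset.prod_image (fun i _ j _ h => Fin.succ_injective _ h), ← hIicProd j]
        exact h
      have hnorm' : ∀ j : Fin m, (P j.castSucc).coeff (j.val + 1) =
          (-1) ^ (j.val + 1) * (t * ∏ k ∈ Finset.Iic j, ((fun i => a i.castSucc) k : R)) *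
            (P j.castSucc).coeff 0 := by
        intro j
        have := hnorm j.castSucc
        rw [← hIicProd j] at this
        exact this
      have hIH : (1 - t) * B.det = (1 - t * A' * Y) * Pi' *
          ∏ i' : Fin m, ∏ j' ∈ Finset.Ioi i', (a j'.castSucc : R) * (x' j' - x' i') :=
        IH x' (fun i => a i.castSucc) t hx' (fun i j => hxa i.succ j.castSucc) hta'
          (fun j => P j.castSucc) (fun j => hdeg j.castSucc) hnorm'
      have hV' : (∏ i' : Fin m, ∏ j' ∈ Finset.Ioi i', (a j'.castSucc : R) * (x' j' - x' i'))
          = Ca' * G := by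
        rw [show (∏ i' : Fin m, ∏ j' ∈ Finset.Ioi i', (a j'.castSucc : R) * (x' j' - x' i'))
            = ∏ i' : Fin m, ((∏ j' ∈ Finset.Ioi i', (a j'.castSucc : R)) *
              ∏ j' ∈ Finset.Ioi i', (x' j' - x' i')) from
          Finset.prod_congr rfl fun i' _ => Finset.prod_mul_distrib]
        rw [Finset.prod_mul_distrib, hCa'def, hGdef]
      have hW1 : (∏ i' : Fin m, (1 - L * x' i')) = L ^ m * Xp := by
        rw [show (∏ i' : Fin m, (1 - L * x' i')) = ∏ i' : Fin m, (L * (L' - x' i')) from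
          Finset.prod_congr rfl fun i' _ => by linear_combination (-1 : R) * hLL']
        rw [Finset.prod_mul_distrib, Finset.prod_const, Finset.card_univ, Fintype.card_fin,
          hXpdef]
      -- determine β
      have hfu1 : f.eval L' = β * (Xp * (1 - t * A' * Y)) := by
        rw [hβ', Polynomial.eval_mul, Polynomial.eval_C, hp2eval L', htAYL, hXpdef]
      have hfu2 : f.eval L' = ((-1) ^ m * Pl * L ^ m * Pi' * (Ca' * G)) *
          (Xp * (1 - t * A' * Y)) := by
        calc f.eval L' = (1 - t) * W.det := hf_eval L'
          _ = (-1) ^ m * Pl * (∏ i' : Fin m, (1 - L * x' i')) * ((1 - t) * B.det) := by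
              rw [hWdet]; ring
          _ = (-1) ^ m * Pl * (L ^ m * Xp) * ((1 - t * A' * Y) * Pi' * (Ca' * G)) := by
              rw [hIH, hV', hW1]
          _ = _ := by ring
      have hβv : β = (-1) ^ m * Pl * L ^ m * Pi' * (Ca' * G) :=
        mul_right_cancel₀ (mul_ne_zero hXpne htAY) (hfu1.symm.trans hfu2)
      -- product identities
      have hIci : ∀ i' : Fin m, Finset.Ici i' = insert i' (Finset.Ioi i') := by
        intro i'
        ext k
        simp only [Finset.mem_Ici, Finset.mem_insert, Finset.mem_Ioi]
        rw [le_iff_eq_or_lt, eq_comm]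
      have hI1 : ∀ i' : Fin m, L * ∏ j' ∈ Finset.Ioi i', (a j'.castSucc : R)
          = (a i'.succ : R) * ∏ j' ∈ Finset.Ioi i', (a j'.succ : R) := by
        intro i'
        have h1 : ∏ k ∈ Finset.Ioi i'.castSucc, (a k : R)
            = L * ∏ j' ∈ Finset.Ioi i', (a j'.castSucc : R) := by
          rw [ioi_castSucc', Finset.prod_insert (by
            intro hmem
            obtain ⟨k, _, hk⟩ := Finset.mem_image.mp hmem
            exact absurd hk (Fin.castSucc_lt_last k).ne),
            Finset.prod_image (hcastinj _)]
        have h2 : ∏ k ∈ Finset.Ioi i'.castSucc, (a k : R)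
            = (a i'.succ : R) * ∏ j' ∈ Finset.Ioi i', (a j'.succ : R) := by
          rw [ioi_castSucc_eq_image_succ_Ici, Finset.prod_image
            (fun i _ j _ h => Fin.succ_injective _ h), hIci i',
            Finset.prod_insert (by simp)]
        rw [← h1, h2]
      have hI : L ^ m * Ca' = Sa * Cs := by
        calc L ^ m * Ca'
            = ∏ i' : Fin m, (L * ∏ j' ∈ Finset.Ioi i', (a j'.castSucc : R)) := by
              rw [Finset.prod_mul_distrib, Finset.prod_const, Finset.card_univ,
                Fintype.card_fin, hCa'def]
          _ = ∏ i' : Fin m, ((a i'.succ : R) * ∏ j' ∈ Finset.Ioi i', (a j'.succ : R)) :=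
              Finset.prod_congr rfl fun i' _ => hI1 i'
          _ = Sa * Cs := by
              rw [Finset.prod_mul_distrib, hSadef, hCsdef]
      -- decompose goal RHS
      have hxprod : (∏ i : Fin (m + 1), x i) = x 0 * Y := by
        rw [Fin.prod_univ_succ]
      have hPi : (∏ i : Fin (m + 1), (P i).eval (((a i)⁻¹ : Rˣ) : R)) = Pi' * Pl := by
        rw [Fin.prod_univ_castSucc]
      have hVV : (∏ i : Fin (m + 1), ∏ j ∈ Finset.Ioi i, (a j : R) * (x j - x i))
          = (Sa * ∏ j' : Fin m, (x' j' - x 0)) * (Cs * G) := by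
        rw [Fin.prod_univ_succ]
        congr 1
        · rw [ioi_zero', Finset.prod_image hsuccinj, Finset.prod_mul_distrib, hSadef]
        · calc (∏ i' : Fin m, ∏ j ∈ Finset.Ioi i'.succ, (a j : R) * (x j - x i'.succ))
              = ∏ i' : Fin m, ((∏ j' ∈ Finset.Ioi i', (a j'.succ : R)) *
                  ∏ j' ∈ Finset.Ioi i', (x' j' - x' i')) := by
                refine Finset.prod_congr rfl fun i' _ => ?_
                rw [ioi_succ', Finset.prod_image (fun i _ j _ h => Fin.succ_injective _ h),
                  Finset.prod_mul_distrib]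
            _ = Cs * G := by rw [Finset.prod_mul_distrib, hCsdef, hGdef]
      have hsign : (∏ j' : Fin m, (x' j' - x 0)) = (-1) ^ m * ∏ j' : Fin m, (x 0 - x' j') := by
        rw [show (∏ j' : Fin m, (x' j' - x 0)) = ∏ j' : Fin m, ((-1) * (x 0 - x' j')) from
          Finset.prod_congr rfl fun j' _ => by ring]
        rw [Finset.prod_mul_distrib, Finset.prod_const, Finset.card_univ, Fintype.card_fin]
      -- final computation
      have hL0 : (1 - t) * (Mval x).det = f.eval (x 0) := by
        rw [hf_eval (x 0), hconsx]
      calc (1 - t) * (Matrix.of fun i j : Fin (m + 1) =>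
            (P j).eval (x i) * ∏ k ∈ Finset.Ioi j, (1 - (a k : R) * x i)).det
          = f.eval (x 0) := hL0
        _ = β * ((∏ i : Fin m, (x 0 - x' i)) * (1 - t * A * Y * x 0)) := by
            rw [hβ', Polynomial.eval_mul, Polynomial.eval_C, hp2eval (x 0)]
        _ = (1 - t * A * ∏ i : Fin (m + 1), x i) *
              (∏ i : Fin (m + 1), (P i).eval (((a i)⁻¹ : Rˣ) : R)) *
              ∏ i : Fin (m + 1), ∏ j ∈ Finset.Ioi i, (a j : R) * (x j - x i) := by
            rw [hxprod, hPi, hVV, hsign, hβv]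
            linear_combination ((-1 : R) ^ m * Pl * Pi' * G * (∏ j' : Fin m, (x 0 - x' j')) *
              (1 - t * A * Y * x 0)) * hI



theorem stmt_15 (n : ℕ) (hn : 1 ≤ n)
    (x a : Fin n → ℂ) (ha : ∀ i, a i ≠ 0) (t : ℂ) (ht : t ≠ 1)
    (P : Fin n → Polynomial ℂ)
    (hdeg : ∀ j : Fin n, (P j).natDegree ≤ j.val + 1)
    (hnorm : ∀ j : Fin n, (P j).coeff (j.val + 1) =
      (-1) ^ (j.val + 1) * (t * ∏ k ∈ Finset.Iic j, a k) * (P j).coeff 0) :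
    Matrix.det (Matrix.of fun i j : Fin n =>
      (P j).eval (x i) * ∏ k ∈ Finset.Ioi j, (1 - a k * x i))
    = (1 - t * (∏ i, a i) * ∏ i, x i) / (1 - t) *
        (∏ i, (P i).eval (1 / a i)) *
        ∏ i : Fin n, ∏ j ∈ Finset.Ioi i, a j * (x j - x i) := by
  classical
  set Rp := MvPolynomial (Fin n) ℂ with hRp
  set u : Fin n → ℂˣ := fun i => Units.mk0 (a i) (ha i) with hudef
  set A : Fin n → Rpˣ :=
    fun i => Units.map (MvPolynomial.C : ℂ →+* Rp).toMonoidHom (u i) with hAdef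
  have hcoe : ∀ i, (A i : Rp) = MvPolynomial.C (a i) := fun i => rfl
  have hcoeinv : ∀ i, ((A i)⁻¹ : Rpˣ) = (MvPolynomial.C ((a i)⁻¹ : ℂ) : Rp) := by
    intro i
    rw [hAdef, ← map_inv]
    rfl
  have hXinj : Function.Injective (MvPolynomial.X : Fin n → Rp) :=
    MvPolynomial.X_injective
  have hxa : ∀ i j : Fin n, (A j : Rp) * MvPolynomial.X i ≠ 1 := by
    intro i j h
    have := congrArg (MvPolynomial.eval (fun _ => (0 : ℂ))) h
    simp [hcoe] at this
  have hta : ∀ (j : Fin n) (S : Finset (Fin n)), S.Nonempty →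
      MvPolynomial.C t * (∏ k ∈ Finset.Iic j, (A k : Rp)) * ∏ i ∈ S, MvPolynomial.X i
        ≠ (A j : Rp) := by
    intro j S hS h
    obtain ⟨i0, hi0⟩ := hS
    have := congrArg (MvPolynomial.eval (fun _ => (0 : ℂ))) h
    simp only [hcoe, map_mul, map_prod, MvPolynomial.eval_C, MvPolynomial.eval_X] at this
    rw [Finset.prod_eq_zero hi0 rfl, mul_zero] at this
    exact ha j this.symm
  have hdeg' : ∀ j : Fin n, ((P j).map (MvPolynomial.C : ℂ →+* Rp)).natDegree ≤ j.val + 1 :=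
    fun j => le_trans (Polynomial.natDegree_map_le) (hdeg j)
  have hnorm' : ∀ j : Fin n, ((P j).map (MvPolynomial.C : ℂ →+* Rp)).coeff (j.val + 1) =
      (-1) ^ (j.val + 1) * (MvPolynomial.C t * ∏ k ∈ Finset.Iic j, (A k : Rp)) *
        ((P j).map (MvPolynomial.C : ℂ →+* Rp)).coeff 0 := by
    intro j
    rw [Polynomial.coeff_map, Polynomial.coeff_map, hnorm j]
    simp only [hcoe, map_mul, map_pow, map_neg, map_one, map_prod]
  have key := generic_det n MvPolynomial.X A (MvPolynomial.C t) hXinj hxa hta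
    (fun j => (P j).map (MvPolynomial.C : ℂ →+* Rp)) hdeg' hnorm'
  have key2 := congrArg (MvPolynomial.eval x : Rp →+* ℂ) key
  beta_reduce at key2
  -- simplify the image identity
  have hevalpoly : ∀ (p : Polynomial ℂ) (q : Rp),
      MvPolynomial.eval x (Polynomial.eval q (p.map (MvPolynomial.C : ℂ →+* Rp)))
        = Polynomial.eval (MvPolynomial.eval x q) p := by
    intro p q
    rw [Polynomial.eval_map, Polynomial.hom_eval₂]
    congr 1
    ext z
    simp
  rw [map_mul, map_sub, map_one, MvPolynomial.eval_C, RingHom.map_det] at key2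
  have hmat : ((MvPolynomial.eval x : Rp →+* ℂ).mapMatrix
        (Matrix.of fun i j : Fin n =>
          Polynomial.eval (MvPolynomial.X i) ((P j).map (MvPolynomial.C : ℂ →+* Rp)) *
            ∏ k ∈ Finset.Ioi j, (1 - (A k : Rp) * MvPolynomial.X i)))
      = Matrix.of fun i j : Fin n =>
          (P j).eval (x i) * ∏ k ∈ Finset.Ioi j, (1 - a k * x i) := by
    ext i j
    simp only [RingHom.mapMatrix_apply, Matrix.map_apply, Matrix.of_apply, map_mul]
    rw [hevalpoly]
    simp only [MvPolynomial.eval_X, map_prod, map_sub, map_one, map_mul, hcoe,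
      MvPolynomial.eval_C]
  rw [hmat] at key2
  simp only [map_mul, map_sub, map_one, map_prod, MvPolynomial.eval_C,
    MvPolynomial.eval_X, hcoeinv, hcoe, hevalpoly] at key2
  -- key2 : (1 - t) * det = (1 - t * ∏ a * ∏ x) * ∏ eval * ∏∏
  have h1t : (1 : ℂ) - t ≠ 0 := sub_ne_zero.mpr (Ne.symm ht)
  simp only [one_div]
  rw [div_mul_eq_mul_div, div_mul_eq_mul_div, eq_div_iff h1t]
  linear_combination key2
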